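/- Suppose A and B are bounded linear operators on ℓ²(ℕ) with ⟨e_j, A e_k⟩ = δ_{jk} + [u_{−1/2,1}]_{j+k+1} and ⟨e_j, B e_k⟩ = δ_{jk} − [u_{1/2,1}]_{j+k+1} for all j,k ≥ 0, i.e. A = I + H(u_{−1/2,1}) and B = I − H(u_{1/2,1}). Then A and B are invertible (bijective with bounded inverse) on ℓ²(ℕ). -/

import Mathlib

open Filter MeasureTheory
open scoped InnerProductSpace

noncomputable section

/-- ℓ²(ℕ) over ℂ. -/
abbrev l2 : Type := lp (fun _ : ℕ => ℂ) 2

/-- The `k`-th Fourier coefficient of a function on the unit circle, given as a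
`2π`-periodic function of the angle: `a_k = (1/(2π)) ∫_0^{2π} f(θ) e^{-ikθ} dθ`. -/
def fc (f : ℝ → ℂ) (k : ℤ) : ℂ :=
  ((1 / (2 * Real.pi) : ℝ) : ℂ) *
    ∫ θ in (0:ℝ)..(2 * Real.pi), f θ * Complex.exp (-(Complex.I * k * θ))

/-- The standard orthonormal basis vector `e_j` of ℓ²(ℕ). -/
def ee (j : ℕ) : l2 := lp.single 2 j 1

/-- Matrix entry `⟨e_j, A e_k⟩` of an operator on ℓ²(ℕ). -/
def ent (A : l2 →L[ℂ] l2) (j k : ℕ) : ℂ := ⟪ee j, A (ee k)⟫_ℂ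

/-- The function `u_{β,1}` on the circle: `u_{β,1}(e^{iθ}) = exp(iβ(θ−π))` for
`0 < θ < 2π`; written as `exp(β · Log(−e^{iθ}))`. -/
def u1 (β : ℂ) (θ : ℝ) : ℂ := Complex.exp (β * Complex.log (-Complex.exp (Complex.I * θ)))

lemma u1_eq {β : ℂ} {θ : ℝ} (h1 : 0 < θ) (h2 : θ ≤ 2 * Real.pi) :
    u1 β θ = Complex.exp (β * (Complex.I * (θ - Real.pi))) := by
  have hexp : -Complex.exp (Complex.I * θ) = Complex.exp (Complex.I * ((θ : ℂ) - Real.pi)) := by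
    rw [mul_sub, Complex.exp_sub]
    rw [show (Complex.I * (Real.pi : ℂ)) = (Real.pi : ℂ) * Complex.I by ring, Complex.exp_pi_mul_I]
    field_simp
  rw [u1, hexp, Complex.log_exp]
  · simp [Complex.mul_im]; linarith [Real.pi_pos]
  · simp [Complex.mul_im]; linarith

lemma fc_u1 (β : ℂ) (n : ℤ) (hβ : β ≠ n) :
    fc (u1 β) n = ((1 / (2 * Real.pi) : ℝ) : ℂ) * (Complex.exp (-(β * Real.pi * Complex.I)) *
      ((Complex.exp (2 * Real.pi * Complex.I * β) - 1) / (Complex.I * (β - n)))) := by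
  have hc : Complex.I * (β - n) ≠ 0 :=
    mul_ne_zero Complex.I_ne_zero (sub_ne_zero.mpr hβ)
  have hpi : (0:ℝ) ≤ 2 * Real.pi := by positivity
  have hfun : Set.EqOn (fun θ : ℝ => u1 β θ * Complex.exp (-(Complex.I * n * θ)))
      (fun θ : ℝ => Complex.exp (-(β * Real.pi * Complex.I)) *
        Complex.exp ((Complex.I * (β - n)) * θ)) (Set.Ioc 0 (2 * Real.pi)) := by
    intro θ hθ
    simp only
    rw [u1_eq hθ.1 hθ.2, ← Complex.exp_add, ← Complex.exp_add]
    congr 1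
    push_cast; ring
  have h2 : Complex.exp ((Complex.I * (β - n)) * ((2 * Real.pi : ℝ) : ℂ))
      = Complex.exp (2 * Real.pi * Complex.I * β) := by
    rw [Complex.exp_eq_exp_iff_exists_int]
    exact ⟨-n, by push_cast; ring⟩
  have h0 : Complex.exp ((Complex.I * (β - n)) * ((0 : ℝ) : ℂ)) = 1 := by
    simp
  have key : (∫ θ in (0:ℝ)..(2 * Real.pi), u1 β θ * Complex.exp (-(Complex.I * n * θ)))
      = Complex.exp (-(β * Real.pi * Complex.I)) *
        ((Complex.exp (2 * Real.pi * Complex.I * β) - 1) / (Complex.I * (β - n))) := by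
    rw [intervalIntegral.integral_of_le hpi,
      MeasureTheory.setIntegral_congr_fun measurableSet_Ioc hfun,
      MeasureTheory.integral_const_mul, ← intervalIntegral.integral_of_le hpi,
      integral_exp_mul_complex hc, h2, h0]
  rw [fc, key]

lemma ne_cast_half (c : ℝ) (n : ℤ) (h : ¬ ∃ m : ℤ, c = m) : (c : ℂ) ≠ (n : ℂ) := by
  intro hc
  exact h ⟨n, by exact_mod_cast congrArg Complex.re hc⟩

lemma half_not_int : ¬ ∃ m : ℤ, (1/2 : ℝ) = m := by
  rintro ⟨m, hm⟩
  have h1 : (2 : ℝ) * (1/2) = 2 * m := by rw [hm]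
  norm_num at h1
  have : (1 : ℤ) = 2 * m := by exact_mod_cast h1
  omega

lemma neg_half_not_int : ¬ ∃ m : ℤ, (-(1/2) : ℝ) = m := by
  rintro ⟨m, hm⟩
  exact half_not_int ⟨-m, by push_cast; linarith⟩

lemma exp_half_pi_I : Complex.exp ((Real.pi/2 : ℝ) * Complex.I) = Complex.I := by
  rw [Complex.exp_mul_I]
  push_cast
  rw [Complex.cos_pi_div_two, Complex.sin_pi_div_two]
  ring

lemma I_mul_div (c : ℂ) (hc0 : c ≠ 0) :
    Complex.I * ((-1 - 1)/(Complex.I * c)) = -2/c := by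
  rw [mul_div_assoc', mul_div_mul_left _ _ Complex.I_ne_zero]
  norm_num

lemma fc_u1_neg_half (j k : ℕ) :
    fc (u1 (-(1/2))) ((j : ℤ) + k + 1)
      = ((1 / (Real.pi * ((j : ℝ) + k + 3/2)) : ℝ) : ℂ) := by
  have hβ : (-(1/2) : ℂ) ≠ (((j : ℤ) + k + 1 : ℤ) : ℂ) := by
    have := ne_cast_half (-(1/2)) ((j : ℤ) + k + 1) neg_half_not_int
    simpa using this
  rw [fc_u1 _ _ hβ]
  have e1 : Complex.exp (-((-(1/2) : ℂ) * Real.pi * Complex.I)) = Complex.I := by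
    rw [show -((-(1/2) : ℂ) * Real.pi * Complex.I) = ((Real.pi/2 : ℝ) : ℂ) * Complex.I by push_cast; ring,
      exp_half_pi_I]
  have e2 : Complex.exp (2 * (Real.pi : ℂ) * Complex.I * (-(1/2))) = -1 := by
    rw [← Complex.exp_pi_mul_I, Complex.exp_eq_exp_iff_exists_int]
    exact ⟨-1, by push_cast; ring⟩
  rw [e1, e2]
  have hc : ((-(1/2) : ℂ) - (((j : ℤ) + k + 1 : ℤ) : ℂ)) ≠ 0 := sub_ne_zero.mpr hβ
  rw [I_mul_div _ hc]
  have hcd : ((-(1/2) : ℂ) - (((j : ℤ) + k + 1 : ℤ) : ℂ)) = ((-((j:ℝ) + k + 3/2) : ℝ) : ℂ) := by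
    push_cast; ring
  rw [hcd, show (-2 : ℂ) = ((-2 : ℝ) : ℂ) by norm_num, ← Complex.ofReal_div, ← Complex.ofReal_mul]
  congr 1
  have h0 : (0:ℝ) < (j:ℝ) + k + 3/2 := by positivity
  have hd1 : (2*Real.pi) * (-((j:ℝ)+k+3/2)) ≠ 0 :=
    mul_ne_zero (by positivity) (neg_ne_zero.mpr (ne_of_gt h0))
  have hd2 : Real.pi * ((j:ℝ)+k+3/2) ≠ 0 := by positivity
  rw [div_mul_div_comm, div_eq_div_iff hd1 hd2]
  ring

lemma fc_u1_half (j k : ℕ) :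
    fc (u1 (1/2)) ((j : ℤ) + k + 1)
      = -(((1 / (Real.pi * ((j : ℝ) + k + 1/2)) : ℝ) : ℂ)) := by
  have hβ : ((1/2) : ℂ) ≠ (((j : ℤ) + k + 1 : ℤ) : ℂ) := by
    have := ne_cast_half (1/2) ((j : ℤ) + k + 1) half_not_int
    simpa using this
  rw [fc_u1 _ _ hβ]
  have e1 : Complex.exp (-(((1/2) : ℂ) * Real.pi * Complex.I)) = -Complex.I := by
    rw [show (-(((1/2) : ℂ) * Real.pi * Complex.I)) = -((Real.pi/2 : ℝ) * Complex.I) by push_cast; ring,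
      Complex.exp_neg, exp_half_pi_I, Complex.inv_I]
  have e2 : Complex.exp (2 * (Real.pi : ℂ) * Complex.I * (1/2)) = -1 := by
    rw [← Complex.exp_pi_mul_I]; congr 1; ring
  rw [e1, e2]
  have hc : (((1/2) : ℂ) - (((j : ℤ) + k + 1 : ℤ) : ℂ)) ≠ 0 := sub_ne_zero.mpr hβ
  rw [neg_mul, I_mul_div _ hc, neg_div, neg_neg]
  have hcd : (((1/2) : ℂ) - (((j : ℤ) + k + 1 : ℤ) : ℂ)) = ((-((j:ℝ) + k + 1/2) : ℝ) : ℂ) := by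
    push_cast; ring
  rw [hcd, show (2 : ℂ) = ((2 : ℝ) : ℂ) by norm_num, ← Complex.ofReal_div, ← Complex.ofReal_mul,
    ← Complex.ofReal_neg]
  congr 1
  have h0 : (0:ℝ) < (j:ℝ) + k + 1/2 := by positivity
  have hd1 : (2*Real.pi) * (-((j:ℝ)+k+1/2)) ≠ 0 :=
    mul_ne_zero (by positivity) (neg_ne_zero.mpr (ne_of_gt h0))
  have hd2 : Real.pi * ((j:ℝ)+k+1/2) ≠ 0 := by positivity
  rw [div_mul_div_comm, show -(1/(Real.pi * ((j:ℝ)+k+1/2))) = (-1)/(Real.pi * ((j:ℝ)+k+1/2)) by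
    rw [neg_div], div_eq_div_iff hd1 hd2]
  ring


/-- positivity of the generalized Hilbert-matrix quadratic form -/
lemma quad_nonneg (lam : ℝ) (hlam : 0 < lam) (s : Finset ℕ) (c : ℕ → ℂ) :
    0 ≤ (∑ j ∈ s, ∑ k ∈ s, (starRingEnd ℂ) (c j) * (c k *
      ((1 / (Real.pi * ((j:ℝ) + (k:ℝ) + lam)) : ℝ) : ℂ))).re := by
  classical
  set term : ℕ → ℕ → ℝ → ℂ := fun j k t =>
    ((1/Real.pi) * t^((j:ℝ) + (k:ℝ) + lam - 1)) • ((starRingEnd ℂ) (c j) * c k) with hterm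
  have hr : ∀ j k : ℕ, (-1 : ℝ) < (j:ℝ) + (k:ℝ) + lam - 1 := by
    intro j k
    have h1 := Nat.cast_nonneg (α := ℝ) j
    have h2 := Nat.cast_nonneg (α := ℝ) k
    linarith
  have coeff : ∀ j k : ℕ, (starRingEnd ℂ) (c j) * (c k *
        ((1 / (Real.pi * ((j:ℝ) + (k:ℝ) + lam)) : ℝ) : ℂ))
      = ∫ t in (0:ℝ)..1, term j k t := by
    intro j k
    rw [hterm]
    simp only
    rw [intervalIntegral.integral_smul_const, intervalIntegral.integral_const_mul,
      integral_rpow (Or.inl (hr j k))]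
    have hd : (0:ℝ) < (j:ℝ) + (k:ℝ) + lam := by
      have h1 := Nat.cast_nonneg (α := ℝ) j
      have h2 := Nat.cast_nonneg (α := ℝ) k
      linarith
    have h1 : ((1:ℝ) ^ ((j:ℝ) + (k:ℝ) + lam - 1 + 1) - (0:ℝ) ^ ((j:ℝ) + (k:ℝ) + lam - 1 + 1))
        / ((j:ℝ) + (k:ℝ) + lam - 1 + 1) = 1 / ((j:ℝ) + (k:ℝ) + lam) := by
      rw [Real.one_rpow, Real.zero_rpow (by linarith)]
      norm_num
    rw [h1, Complex.real_smul]
    have hπ : (Real.pi : ℝ) ≠ 0 := Real.pi_ne_zero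
    have h2 : ((1:ℝ) / (Real.pi * ((j:ℝ) + (k:ℝ) + lam)) : ℝ)
        = (1/Real.pi) * (1/((j:ℝ) + (k:ℝ) + lam)) := by
      field_simp
    rw [h2]
    push_cast
    ring
  have integ : ∀ j k : ℕ, IntervalIntegrable (term j k) MeasureTheory.volume 0 1 := by
    intro j k
    have base : IntervalIntegrable (fun t : ℝ => (1/Real.pi) * t^((j:ℝ) + (k:ℝ) + lam - 1))
        MeasureTheory.volume 0 1 :=
      (intervalIntegral.intervalIntegrable_rpow' (hr j k)).const_mul _
    exact ⟨base.1.smul_const _, base.2.smul_const _⟩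
  have hQ : (∑ j ∈ s, ∑ k ∈ s, (starRingEnd ℂ) (c j) * (c k *
        ((1 / (Real.pi * ((j:ℝ) + (k:ℝ) + lam)) : ℝ) : ℂ)))
      = ∫ t in (0:ℝ)..1, ∑ j ∈ s, ∑ k ∈ s, term j k t := by
    calc (∑ j ∈ s, ∑ k ∈ s, (starRingEnd ℂ) (c j) * (c k *
          ((1 / (Real.pi * ((j:ℝ) + (k:ℝ) + lam)) : ℝ) : ℂ)))
        = ∑ j ∈ s, ∫ t in (0:ℝ)..1, ∑ k ∈ s, term j k t := by
          refine Finset.sum_congr rfl fun j _ => ?_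
          rw [intervalIntegral.integral_finset_sum (fun k _ => integ j k)]
          exact Finset.sum_congr rfl fun k _ => coeff j k
      _ = ∫ t in (0:ℝ)..1, ∑ j ∈ s, ∑ k ∈ s, term j k t :=
          (intervalIntegral.integral_finset_sum (f := fun j t => ∑ k ∈ s, term j k t)
            (fun j _ => by
              have h := IntervalIntegrable.sum s (fun k _ => integ j k)
              have heq : (∑ k ∈ s, term j k) = fun t => ∑ k ∈ s, term j k t := by
                funext t
                simp [Finset.sum_apply]
              rwa [heq] at h)).symm
  -- pointwise identification on (0,1]
  set f : ℝ → ℂ := fun t => ∑ j ∈ s, c j * (t:ℂ)^j with hf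
  set g : ℝ → ℝ := fun t => (1/Real.pi) * t^(lam-1) * Complex.normSq (f t) with hg
  have hpt : ∀ t ∈ Set.Ioc (0:ℝ) 1,
      (∑ j ∈ s, ∑ k ∈ s, term j k t) = ((g t : ℝ) : ℂ) := by
    intro t ht
    have ht0 : (0:ℝ) < t := ht.1
    have hsplit : ∀ j k : ℕ, term j k t
        = ((1/Real.pi) * t^(lam-1)) • ((((starRingEnd ℂ) (c j)) * (t:ℂ)^j) * (c k * (t:ℂ)^k)) := by
      intro j k
      rw [hterm]
      simp only
      have : t^((j:ℝ) + (k:ℝ) + lam - 1) = t^(j:ℕ) * t^(k:ℕ) * t^(lam-1) := by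
        rw [show (j:ℝ) + (k:ℝ) + lam - 1 = (j:ℝ) + ((k:ℝ) + (lam-1)) by ring,
          Real.rpow_add ht0, Real.rpow_add ht0, Real.rpow_natCast, Real.rpow_natCast]
        ring
      rw [this, Complex.real_smul, Complex.real_smul]
      push_cast
      ring
    calc (∑ j ∈ s, ∑ k ∈ s, term j k t)
        = ((1/Real.pi) * t^(lam-1)) •
            ∑ j ∈ s, ∑ k ∈ s, ((((starRingEnd ℂ) (c j)) * (t:ℂ)^j) * (c k * (t:ℂ)^k)) := by
          rw [Finset.smul_sum]
          refine Finset.sum_congr rfl fun j _ => ?_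
          rw [Finset.smul_sum]
          exact Finset.sum_congr rfl fun k _ => hsplit j k
      _ = ((1/Real.pi) * t^(lam-1)) • ((starRingEnd ℂ) (f t) * f t) := by
          have hconj : (starRingEnd ℂ) (f t) = ∑ j ∈ s, (starRingEnd ℂ) (c j) * (t:ℂ)^j := by
            rw [hf]
            simp only
            rw [map_sum]
            refine Finset.sum_congr rfl fun j _ => ?_
            rw [map_mul, map_pow, Complex.conj_ofReal]
          rw [hconj, hf, Finset.sum_mul_sum]
      _ = ((g t : ℝ) : ℂ) := by
          rw [hg]
          simp only
          push_cast
          rw [Complex.real_smul, Complex.normSq_eq_conj_mul_self]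
          push_cast
          ring
  have h01 : (0:ℝ) ≤ 1 := zero_le_one
  rw [hQ, intervalIntegral.integral_of_le h01,
    MeasureTheory.setIntegral_congr_fun measurableSet_Ioc hpt,
    ← intervalIntegral.integral_of_le h01, intervalIntegral.integral_ofReal,
    Complex.ofReal_re]
  refine intervalIntegral.integral_nonneg h01 fun t ht => ?_
  rw [hg]
  simp only
  have h1 : (0:ℝ) ≤ t^(lam-1) := Real.rpow_nonneg ht.1 _
  have h2 : (0:ℝ) ≤ Complex.normSq (f t) := Complex.normSq_nonneg _
  positivity


lemma inner_ee (x : l2) (j : ℕ) : ⟪ee j, x⟫_ℂ = x j := by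
  rw [ee, lp.inner_single_left]
  simp

lemma ee_inner_ee (j k : ℕ) : ⟪ee j, ee k⟫_ℂ = if j = k then 1 else 0 := by
  rw [inner_ee, ee, lp.single_apply]
  simp only [Pi.single_apply]

lemma dense_ee : (Submodule.span ℂ (Set.range ee)).topologicalClosure = ⊤ := by
  rw [Submodule.topologicalClosure_eq_top_iff, Submodule.eq_bot_iff]
  intro x hx
  have hz : ∀ j, x j = 0 := by
    intro j
    have h := (Submodule.mem_orthogonal _ x).mp hx (ee j) (Submodule.subset_span ⟨j, rfl⟩)
    rwa [inner_ee] at h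
  exact lp.ext (funext hz)

set_option maxHeartbeats 1000000 in
lemma invert_of_entries (M : l2 →L[ℂ] l2) (lam : ℝ) (hlam : 0 < lam)
    (hM : ∀ j k : ℕ, ent M j k = (if j = k then 1 else 0) +
      ((1 / (Real.pi * ((j:ℝ) + (k:ℝ) + lam)) : ℝ) : ℂ)) :
    ∃ M' : l2 →L[ℂ] l2, M ∘L M' = 1 ∧ M' ∘L M = 1 := by
  classical
  -- coercivity on the span of the basis vectors
  have hspan : ∀ y ∈ Submodule.span ℂ (Set.range ee), ‖y‖^2 ≤ (⟪y, M y⟫_ℂ).re := by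
    intro y hy
    obtain ⟨c, hc⟩ := Finsupp.mem_span_range_iff_exists_finsupp.mp hy
    set s : Finset ℕ := c.support with hs
    have hy' : y = ∑ j ∈ s, c j • ee j := by
      rw [← hc, Finsupp.sum]
    have expand : ∀ (T : l2 →L[ℂ] l2), ⟪y, T y⟫_ℂ
        = ∑ j ∈ s, ∑ k ∈ s, (starRingEnd ℂ) (c j) * (c k * ⟪ee j, T (ee k)⟫_ℂ) := by
      intro T
      rw [hy']
      rw [map_sum]
      simp only [sum_inner, inner_sum, _root_.map_smul, inner_smul_left, inner_smul_right]
      rw [Finset.sum_comm]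
      refine Finset.sum_congr rfl fun j _ => ?_
      rw [Finset.mul_sum]
      exact Finset.sum_congr rfl fun k _ => by ring
    have hself : ⟪y, y⟫_ℂ
        = ∑ j ∈ s, ∑ k ∈ s, (starRingEnd ℂ) (c j) * (c k * ⟪ee j, ee k⟫_ℂ) := by
      have h := expand (ContinuousLinearMap.id ℂ l2)
      simp only [ContinuousLinearMap.coe_id', id_eq] at h
      exact h
    have hsplit : ⟪y, M y⟫_ℂ = ⟪y, y⟫_ℂ
        + ∑ j ∈ s, ∑ k ∈ s, (starRingEnd ℂ) (c j) * (c k *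
            ((1 / (Real.pi * ((j:ℝ) + (k:ℝ) + lam)) : ℝ) : ℂ)) := by
      rw [expand M, hself, ← Finset.sum_add_distrib]
      refine Finset.sum_congr rfl fun j _ => ?_
      rw [← Finset.sum_add_distrib]
      refine Finset.sum_congr rfl fun k _ => ?_
      have := hM j k
      rw [ent] at this
      rw [this, ee_inner_ee]
      ring
    have hQ := quad_nonneg lam hlam s c
    have hn : ‖y‖^2 = (⟪y, y⟫_ℂ).re := (inner_self_eq_norm_sq (𝕜 := ℂ) y).symm
    rw [hn, hsplit, Complex.add_re]
    linarith
  -- coercivity everywhere by density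
  have coercive : ∀ x : l2, ‖x‖^2 ≤ (⟪x, M x⟫_ℂ).re := by
    have hclosed : IsClosed {x : l2 | ‖x‖^2 ≤ (⟪x, M x⟫_ℂ).re} := by
      refine isClosed_le ?_ ?_
      · exact (continuous_norm.pow 2)
      · exact Complex.continuous_re.comp (continuous_id.inner M.continuous)
    intro x
    have hx : x ∈ closure (Submodule.span ℂ (Set.range ee) : Set l2) := by
      have : x ∈ (Submodule.span ℂ (Set.range ee)).topologicalClosure := by
        rw [dense_ee]; trivial
      exact this
    exact hclosed.closure_subset_iff.mpr hspan hx
  -- M and its adjoint are bounded below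
  have lower : ∀ (T : l2 →L[ℂ] l2), (∀ x : l2, ‖x‖^2 ≤ (⟪x, T x⟫_ℂ).re) →
      ∀ x : l2, ‖x‖ ≤ ‖T x‖ := by
    intro T hT x
    rcases eq_or_lt_of_le (norm_nonneg x) with h0 | h0
    · simp [← h0]
    · have h1 := hT x
      have h2 := re_inner_le_norm (𝕜 := ℂ) x (T x)
      have h3 : ‖x‖^2 ≤ ‖x‖ * ‖T x‖ := le_trans h1 h2
      nlinarith
  have hb : ∀ x : l2, ‖x‖ ≤ ‖M x‖ := lower M coercive
  set Md := ContinuousLinearMap.adjoint M with hMd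
  have coercive' : ∀ x : l2, ‖x‖^2 ≤ (⟪x, Md x⟫_ℂ).re := by
    intro x
    have h1 : ⟪x, Md x⟫_ℂ = ⟪M x, x⟫_ℂ := ContinuousLinearMap.adjoint_inner_right M x x
    have h2 : ⟪M x, x⟫_ℂ = (starRingEnd ℂ) ⟪x, M x⟫_ℂ := (inner_conj_symm _ _).symm
    rw [h1, h2, Complex.conj_re]
    exact coercive x
  have hb' : ∀ x : l2, ‖x‖ ≤ ‖Md x‖ := lower Md coercive'
  -- injectivity
  have hinj : Function.Injective M := by
    intro a b hab
    have h1 : ‖a - b‖ ≤ ‖M (a - b)‖ := hb _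
    rw [map_sub, hab, sub_self, norm_zero] at h1
    have := norm_nonneg (a - b)
    have : ‖a - b‖ = 0 := le_antisymm h1 this
    exact sub_eq_zero.mp (norm_eq_zero.mp this)
  have hker : LinearMap.ker (M : l2 →ₗ[ℂ] l2) = ⊥ := LinearMap.ker_eq_bot.mpr hinj
  -- closed range
  have hanti : AntilipschitzWith 1 M := M.antilipschitz_of_bound (by simpa using hb)
  have hclosedrange : IsClosed (LinearMap.range (M : l2 →ₗ[ℂ] l2) : Set l2) := by
    have h := hanti.isClosed_range M.uniformContinuous
    have h2 : (LinearMap.range (M : l2 →ₗ[ℂ] l2) : Set l2) = Set.range ⇑M := by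
      ext z
      simp only [SetLike.mem_coe, LinearMap.mem_range, Set.mem_range,
        ContinuousLinearMap.coe_coe]
    rw [h2]
    exact h
  -- full range
  have horth : (LinearMap.range (M : l2 →ₗ[ℂ] l2))ᗮ = ⊥ := by
    rw [Submodule.eq_bot_iff]
    intro x hx
    have h2 : ⟪Md x, Md x⟫_ℂ = 0 := by
      have h3 := (Submodule.mem_orthogonal _ x).mp hx (M (Md x)) ⟨Md x, rfl⟩
      calc ⟪Md x, Md x⟫_ℂ = ⟪M (Md x), x⟫_ℂ := by
            rw [hMd]
            exact ContinuousLinearMap.adjoint_inner_right M _ x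
        _ = 0 := h3
    have h4 : Md x = 0 := inner_self_eq_zero.mp h2
    have h5 := hb' x
    rw [h4, norm_zero] at h5
    exact norm_eq_zero.mp (le_antisymm h5 (norm_nonneg x))
  have hrange : LinearMap.range (M : l2 →ₗ[ℂ] l2) = ⊤ := by
    have h6 := Submodule.topologicalClosure_eq_top_iff.mpr horth
    rwa [IsClosed.submodule_topologicalClosure_eq hclosedrange] at h6
  -- conclude
  let e := ContinuousLinearEquiv.ofBijective M hker hrange
  have hcoe : ∀ z : l2, e z = M z := fun z =>
    congrArg (fun f : l2 →L[ℂ] l2 => f z) (ContinuousLinearEquiv.coe_ofBijective M hker hrange)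
  refine ⟨(e.symm : l2 →L[ℂ] l2), ?_, ?_⟩
  · ext x
    simp only [ContinuousLinearMap.coe_comp', Function.comp_apply,
      ContinuousLinearMap.one_apply, ContinuousLinearEquiv.coe_coe]
    rw [← hcoe (e.symm x), ContinuousLinearEquiv.apply_symm_apply]
  · ext x
    simp only [ContinuousLinearMap.coe_comp', Function.comp_apply,
      ContinuousLinearMap.one_apply, ContinuousLinearEquiv.coe_coe]
    rw [← hcoe x, ContinuousLinearEquiv.symm_apply_apply]


/-- If `A = I + H(u_{−1/2,1})` and `B = I − H(u_{1/2,1})` on ℓ²(ℕ), then `A` and `B`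
are invertible (bijective with bounded inverse). -/
theorem stmt1 (A B : l2 →L[ℂ] l2)
    (hA : ∀ j k : ℕ, ent A j k =
      (if j = k then 1 else 0) + fc (u1 (-(1/2))) ((j : ℤ) + k + 1))
    (hB : ∀ j k : ℕ, ent B j k =
      (if j = k then 1 else 0) - fc (u1 (1/2)) ((j : ℤ) + k + 1)) :
    (∃ A' : l2 →L[ℂ] l2, A ∘L A' = 1 ∧ A' ∘L A = 1) ∧
    (∃ B' : l2 →L[ℂ] l2, B ∘L B' = 1 ∧ B' ∘L B = 1) := by
  constructor
  · refine invert_of_entries A (3/2) (by norm_num) fun j k => ?_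
    rw [hA j k, fc_u1_neg_half j k]
  · refine invert_of_entries B (1/2) (by norm_num) fun j k => ?_
    rw [hB j k, fc_u1_half j k, sub_neg_eq_add]

end
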